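/- Let N be a positive integer and for each i ∈ {1,…,N} let C^i be a set of M-dimensional real vectors (the cost vectors of the individual paths of agent i). Let c^i ∈ C^i for each i and suppose the sum Σ_{i=1}^N c^i is non-dominated within the sumset {Σ_{i=1}^N d^i : d^i ∈ C^i for each i}. Then for every j ∈ {1,…,N}, the vector c^j is non-dominated within C^j. (This justifies MOM*'s Pareto policies: every Pareto-optimal joint path, when agent–agent conflicts are ignored, is composed of individually Pareto-optimal paths.) -/
import Mathlib


/-- `a` dominates `b`: componentwise `a ≤ b`, strictly in at least one component. -/
def Dominates {M : ℕ} (a b : Fin M → ℝ) : Prop :=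
  (∀ m, a m ≤ b m) ∧ ∃ m, a m < b m

/-- If the joint cost `∑ i, c i` is non-dominated within the sumset
`{∑ i, d i : d i ∈ C i}`, then each individual cost `c j` is non-dominated
within `C j`. (Pareto-optimal joint paths consist of individually
Pareto-optimal paths.) -/
theorem pareto_joint_implies_pareto_individual (M N : ℕ) (hM : 0 < M) (hN : 0 < N)
    (C : Fin N → Set (Fin M → ℝ)) (c : Fin N → Fin M → ℝ)
    (hc : ∀ i, c i ∈ C i)
    (hnd : ∀ d : Fin N → Fin M → ℝ, (∀ i, d i ∈ C i) →
      ¬ Dominates (∑ i, d i) (∑ i, c i)) :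
    ∀ j, ∀ x ∈ C j, ¬ Dominates x (c j) := by
  intro j x hx hdom
  apply hnd (Function.update c j x) (fun i => by
    by_cases h : i = j
    · subst h; simpa using hx
    · simpa [Function.update_of_ne h] using hc i)
  obtain ⟨hle, m, hlt⟩ := hdom
  constructor
  · intro m'
    simp only [Finset.sum_apply]
    apply Finset.sum_le_sum
    intro i _
    by_cases h : i = j
    · subst h; simpa using hle m'
    · simp [Function.update_of_ne h]
  · refine ⟨m, ?_⟩
    simp only [Finset.sum_apply]
    refine Finset.sum_lt_sum (fun i _ => ?_) ⟨j, Finset.mem_univ j, by simpa using hlt⟩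
    by_cases h : i = j
    · subst h; simpa using hle m
    · simp [Function.update_of_ne h]
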